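/- The graded nilHecke ring NH_m contains the element e_m = x₁^{m−1} x₂^{m−2} ⋯ x_{m−1} ∂_{w₀}, where w₀ is the longest element of S_m and ∂_{w₀} is the corresponding product of divided difference operators; e_m is an idempotent: e_m² = e_m. -/

import Mathlib

set_option maxHeartbeats 1000000
set_option synthInstance.maxHeartbeats 400000

open MvPolynomial

/-- A reduced word for the longest element w₀ of S_m (0-indexed simple reflections):
(s₀)(s₁s₀)(s₂s₁s₀)⋯ . -/
def longestWord (m : ℕ) : List ℕ := (List.range m).flatMap fun k => (List.range k).reverse

namespace NilHeckeAux

/-- abstract field braid computation -/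
lemma braid_field {F : Type} [Field F] (u v w : F) (s t : F →+* F)
    (hsu : s u = v) (hsv : s v = u) (hsw : s w = w)
    (htu : t u = u) (htv : t v = w) (htw : t w = v)
    (hss : ∀ y, s (s y) = y) (htt : ∀ y, t (t y) = y)
    (huv : u - v ≠ 0) (hvw : v - w ≠ 0) (huw : u - w ≠ 0)
    (x : F) (hsts : s (t (s x)) = t (s (t x))) :
    (u - v)⁻¹ * (((v - w)⁻¹ * (((u-v)⁻¹ * (x - s x)) - t ((u-v)⁻¹ * (x - s x))))
       - s ((v - w)⁻¹ * (((u-v)⁻¹ * (x - s x)) - t ((u-v)⁻¹ * (x - s x)))))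
    = (v - w)⁻¹ * (((u - v)⁻¹ * (((v-w)⁻¹ * (x - t x)) - s ((v-w)⁻¹ * (x - t x))))
       - t ((u - v)⁻¹ * (((v-w)⁻¹ * (x - t x)) - s ((v-w)⁻¹ * (x - t x))))) := by
  have hvu : v - u ≠ 0 := fun hh => huv (by linear_combination -hh)
  have hwv : w - v ≠ 0 := fun hh => hvw (by linear_combination -hh)
  have hwu : w - u ≠ 0 := fun hh => huw (by linear_combination -hh)
  simp only [map_mul, map_sub, map_inv₀, hsu, hsv, hsw, htu, htv, htw, hss, htt]
  rw [hsts]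
  have e1 : (v-u)⁻¹ = -(u-v)⁻¹ := by rw [← neg_sub u v, inv_neg]
  have e2 : (w-v)⁻¹ = -(v-w)⁻¹ := by rw [← neg_sub v w, inv_neg]
  rw [e1, e2]
  set a := (u - v)⁻¹ with hadef
  set b := (v - w)⁻¹ with hbdef
  set c := (u - w)⁻¹ with hcdef
  have ha : a * (u - v) = 1 := inv_mul_cancel₀ huv
  have hb : b * (v - w) = 1 := inv_mul_cancel₀ hvw
  have hc : c * (u - w) = 1 := inv_mul_cancel₀ huw
  linear_combination (b*c*(b*(t x - x) + a*(x - s x)))*ha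
    + (a*c*(b*(t x - x) + a*(x - s x)))*hb - (a*b*(b*(t x - x) + a*(x - s x)))*hc

variable {m : ℕ}

abbrev Pm (m : ℕ) := MvPolynomial (Fin m) ℤ

def fi (a : ℕ) (h : a + 1 < m) : Fin m := ⟨a, Nat.lt_of_succ_lt h⟩
def fj (a : ℕ) (h : a + 1 < m) : Fin m := ⟨a + 1, h⟩

noncomputable def SW (a : ℕ) (h : a + 1 < m) : Pm m →ₐ[ℤ] Pm m :=
  rename (Equiv.swap (fi a h) (fj a h))

lemma fi_ne_fj (a : ℕ) (h : a + 1 < m) : fi a h ≠ fj a h := by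
  simp [fi, fj, Fin.ext_iff]

lemma xd_ne (a : ℕ) (h : a + 1 < m) : (X (fi a h) - X (fj a h) : Pm m) ≠ 0 := by
  rw [sub_ne_zero]
  exact fun hx => fi_ne_fj a h (X_injective hx)

lemma cancel (a : ℕ) (h : a + 1 < m) {p q : Pm m}
    (hpq : (X (fi a h) - X (fj a h)) * p = (X (fi a h) - X (fj a h)) * q) : p = q :=
  mul_left_cancel₀ (xd_ne a h) hpq

lemma SW_SW (a : ℕ) (h : a + 1 < m) (p : Pm m) : SW a h (SW a h p) = p := by
  simp [SW, rename_rename]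
  have : (⇑(Equiv.swap (fi a h) (fj a h)) ∘ ⇑(Equiv.swap (fi a h) (fj a h))) = id := by
    funext x; simp
  rw [this, rename_id]
  rfl

lemma swap_comm_apply {i j k l x : Fin m} (h1 : i ≠ k) (h2 : i ≠ l) (h3 : j ≠ k) (h4 : j ≠ l) :
    Equiv.swap i j (Equiv.swap k l x) = Equiv.swap k l (Equiv.swap i j x) := by
  simp only [Equiv.swap_apply_def]
  split_ifs <;> simp_all

lemma disj {a b : ℕ} (h : a + 1 < m) (hb : b + 1 < m) (hab : a + 2 ≤ b) :
    fi a h ≠ fi b hb ∧ fi a h ≠ fj b hb ∧ fj a h ≠ fi b hb ∧ fj a h ≠ fj b hb := by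
  refine ⟨?_, ?_, ?_, ?_⟩ <;> simp [fi, fj, Fin.ext_iff] <;> omega

lemma SW_fix_sub {a b : ℕ} (h : a + 1 < m) (hb : b + 1 < m) (hab : a + 2 ≤ b) :
    SW a h (X (fi b hb) - X (fj b hb)) = X (fi b hb) - X (fj b hb) := by
  obtain ⟨d1, d2, d3, d4⟩ := disj h hb hab
  simp [SW, rename_X, Equiv.swap_apply_of_ne_of_ne d1.symm d3.symm,
    Equiv.swap_apply_of_ne_of_ne d2.symm d4.symm]

lemma SW_fix_sub' {a b : ℕ} (h : a + 1 < m) (hb : b + 1 < m) (hab : a + 2 ≤ b) :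
    SW b hb (X (fi a h) - X (fj a h)) = X (fi a h) - X (fj a h) := by
  obtain ⟨d1, d2, d3, d4⟩ := disj h hb hab
  simp [SW, rename_X, Equiv.swap_apply_of_ne_of_ne d1 d2,
    Equiv.swap_apply_of_ne_of_ne d3 d4]

lemma SW_comm {a b : ℕ} (h : a + 1 < m) (hb : b + 1 < m) (hab : a + 2 ≤ b) (p : Pm m) :
    SW a h (SW b hb p) = SW b hb (SW a h p) := by
  obtain ⟨d1, d2, d3, d4⟩ := disj h hb hab
  simp only [SW, rename_rename]
  have : (⇑(Equiv.swap (fi a h) (fj a h)) ∘ ⇑(Equiv.swap (fi b hb) (fj b hb)))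
      = (⇑(Equiv.swap (fi b hb) (fj b hb)) ∘ ⇑(Equiv.swap (fi a h) (fj a h))) := by
    funext x
    exact swap_comm_apply d1 d2 d3 d4
  rw [this]

/-! fraction field -/

noncomputable abbrev K (m : ℕ) := FractionRing (Pm m)

noncomputable def phi : Pm m →+* K m := algebraMap (Pm m) (K m)

lemma phi_inj : Function.Injective (phi (m := m)) := IsFractionRing.injective _ _

noncomputable def Phi (σ : Equiv.Perm (Fin m)) : K m →+* K m :=
  IsFractionRing.lift (g := (phi (m := m)).comp (rename (σ : Fin m → Fin m)).toRingHom)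
    (phi_inj.comp (rename_injective _ σ.injective))

lemma Phi_phi (σ : Equiv.Perm (Fin m)) (p : Pm m) :
    Phi σ (phi p) = phi (rename (σ : Fin m → Fin m) p) :=
  IsFractionRing.lift_algebraMap _ _

lemma Phi_comp {σ τ ρ : Equiv.Perm (Fin m)} (hρ : (σ : Fin m → Fin m) ∘ (τ : Fin m → Fin m) = ρ)
    (x : K m) : Phi σ (Phi τ x) = Phi ρ x := by
  have : (Phi σ).comp (Phi τ) = Phi (m := m) ρ := by
    apply IsLocalization.ringHom_ext (nonZeroDivisors (Pm m))
    apply RingHom.ext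
    intro p
    show Phi σ (Phi τ (phi p)) = Phi ρ (phi p)
    rw [Phi_phi, Phi_phi, Phi_phi, rename_rename, hρ]
  calc Phi σ (Phi τ x) = (Phi σ).comp (Phi τ) x := rfl
    _ = Phi ρ x := by rw [this]

lemma Phi_one (x : K m) : Phi (1 : Equiv.Perm (Fin m)) x = x := by
  have : Phi (1 : Equiv.Perm (Fin m)) = RingHom.id (K m) := by
    apply IsLocalization.ringHom_ext (nonZeroDivisors (Pm m))
    apply RingHom.ext
    intro p
    show Phi 1 (phi p) = phi p
    rw [Phi_phi]
    simp [rename_id]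
  rw [this]; rfl

noncomputable def Dh (i j : Fin m) : K m → K m :=
  fun x => (phi (X i) - phi (X j))⁻¹ * (x - Phi (Equiv.swap i j) x)

lemma swap_braid {i j k : Fin m} (hij : i ≠ j) (hjk : j ≠ k) (hik : i ≠ k) :
    Equiv.swap i j * (Equiv.swap j k * Equiv.swap i j)
      = Equiv.swap j k * (Equiv.swap i j * Equiv.swap j k) := by
  have h1 := Equiv.swap_apply_apply (Equiv.swap i j) j k
  have h2 := Equiv.swap_apply_apply (Equiv.swap j k) i j
  rw [Equiv.swap_apply_right, Equiv.swap_apply_of_ne_of_ne hik.symm hjk.symm] at h1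
  rw [Equiv.swap_apply_of_ne_of_ne hij hik, Equiv.swap_apply_left] at h2
  have hinv : (Equiv.swap i j)⁻¹ = Equiv.swap i j := Equiv.swap_inv i j
  rw [hinv] at h1
  rw [Equiv.swap_inv] at h2
  rw [← mul_assoc, ← h1, ← mul_assoc, ← h2]

lemma phiX_ne {i j : Fin m} (hij : i ≠ j) : phi (X i) - phi (X j) ≠ (0 : K m) := by
  rw [sub_ne_zero]
  intro hx
  exact hij (X_injective (phi_inj hx))

lemma braidK {i j k : Fin m} (hij : i ≠ j) (hjk : j ≠ k) (hik : i ≠ k) (x : K m) :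
    Dh i j (Dh j k (Dh i j x)) = Dh j k (Dh i j (Dh j k x)) := by
  have hsu : Phi (Equiv.swap i j) (phi (X i)) = phi (X j) := by rw [Phi_phi]; simp
  have hsv : Phi (Equiv.swap i j) (phi (X j)) = phi (X i) := by rw [Phi_phi]; simp
  have hsw : Phi (Equiv.swap i j) (phi (X k)) = phi (X k) := by
    rw [Phi_phi]; rw [rename_X, Equiv.swap_apply_of_ne_of_ne hik.symm hjk.symm]
  have htu : Phi (Equiv.swap j k) (phi (X i)) = phi (X i) := by
    rw [Phi_phi]; rw [rename_X, Equiv.swap_apply_of_ne_of_ne hij hik]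
  have htv : Phi (Equiv.swap j k) (phi (X j)) = phi (X k) := by rw [Phi_phi]; simp
  have htw : Phi (Equiv.swap j k) (phi (X k)) = phi (X j) := by rw [Phi_phi]; simp
  have Hss : ∀ y : K m, Phi (Equiv.swap i j) (Phi (Equiv.swap i j) y) = y := by
    intro y
    rw [Phi_comp (ρ := 1) (by funext z; simp), Phi_one]
  have Htt : ∀ y : K m, Phi (Equiv.swap j k) (Phi (Equiv.swap j k) y) = y := by
    intro y
    rw [Phi_comp (ρ := 1) (by funext z; simp), Phi_one]
  have Hsts : Phi (Equiv.swap i j) (Phi (Equiv.swap j k) (Phi (Equiv.swap i j) x))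
      = Phi (Equiv.swap j k) (Phi (Equiv.swap i j) (Phi (Equiv.swap j k) x)) := by
    rw [Phi_comp (ρ := Equiv.swap j k * Equiv.swap i j) (Equiv.Perm.coe_mul _ _).symm,
        Phi_comp (ρ := Equiv.swap i j * (Equiv.swap j k * Equiv.swap i j)) (Equiv.Perm.coe_mul _ _).symm,
        Phi_comp (ρ := Equiv.swap i j * Equiv.swap j k) (Equiv.Perm.coe_mul _ _).symm,
        Phi_comp (ρ := Equiv.swap j k * (Equiv.swap i j * Equiv.swap j k)) (Equiv.Perm.coe_mul _ _).symm,
        swap_braid hij hjk hik]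
  exact braid_field (phi (X i)) (phi (X j)) (phi (X k)) (Phi (Equiv.swap i j))
    (Phi (Equiv.swap j k)) hsu hsv hsw htu htv htw Hss Htt
    (phiX_ne hij) (phiX_ne hjk) (phiX_ne hik) x Hsts

section WithD

variable (D : ℕ → Module.End ℤ (Pm m))
variable (hD : ∀ (a : ℕ) (h : a + 1 < m) (f : Pm m),
      (X (⟨a, Nat.lt_of_succ_lt h⟩ : Fin m) - X ⟨a + 1, h⟩) * D a f
        = f - rename (Equiv.swap (⟨a, Nat.lt_of_succ_lt h⟩ : Fin m) ⟨a + 1, h⟩) f)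

include hD

lemma hD' (a : ℕ) (h : a + 1 < m) (f : Pm m) :
    (X (fi a h) - X (fj a h)) * D a f = f - SW a h f := hD a h f

lemma SW_D (a : ℕ) (h : a + 1 < m) (f : Pm m) : SW a h (D a f) = D a f := by
  apply cancel a h
  have h1 := hD' D hD a h f
  calc (X (fi a h) - X (fj a h)) * SW a h (D a f)
      = -(SW a h ((X (fi a h) - X (fj a h)) * D a f)) := by
        simp [SW, Equiv.swap_apply_left, Equiv.swap_apply_right, fi, fj]
        ring
    _ = -(SW a h f - SW a h (SW a h f)) := by rw [h1]; simp [SW]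
    _ = (X (fi a h) - X (fj a h)) * D a f := by rw [SW_SW, hD' D hD a h f]; ring

lemma D_D (a : ℕ) (h : a + 1 < m) (f : Pm m) : D a (D a f) = 0 := by
  apply cancel a h (q := 0)
  rw [hD' D hD a h, SW_D D hD a h, sub_self, mul_zero]

/-- Leibniz for invariant left factor -/
lemma D_mul_inv (a : ℕ) (h : a + 1 < m) {g : Pm m} (hg : SW a h g = g) (p : Pm m) :
    D a (g * p) = g * D a p := by
  apply cancel a h
  rw [hD' D hD a h]
  have : SW a h (g * p) = g * SW a h p := by rw [map_mul, hg]
  rw [this, mul_left_comm, hD' D hD a h, mul_sub]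

lemma inv_of_D_eq_zero (a : ℕ) (h : a + 1 < m) {g : Pm m} (hg : D a g = 0) :
    SW a h g = g := by
  have := hD' D hD a h g
  rw [hg, mul_zero] at this
  exact ((sub_eq_zero.mp this.symm)).symm

lemma SW_D_comm {a b : ℕ} (h : a + 1 < m) (hb : b + 1 < m) (hab : a + 2 ≤ b) (p : Pm m) :
    SW a h (D b p) = D b (SW a h p) := by
  apply cancel b hb
  rw [hD' D hD b hb]
  calc (X (fi b hb) - X (fj b hb)) * SW a h (D b p)
      = SW a h ((X (fi b hb) - X (fj b hb)) * D b p) := by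
        rw [map_mul, SW_fix_sub h hb hab]
    _ = SW a h p - SW b hb (SW a h p) := by
        rw [hD' D hD b hb, map_sub, SW_comm h hb hab]

lemma SW_D_comm' {a b : ℕ} (h : a + 1 < m) (hb : b + 1 < m) (hab : a + 2 ≤ b) (p : Pm m) :
    SW b hb (D a p) = D a (SW b hb p) := by
  apply cancel a h
  rw [hD' D hD a h]
  calc (X (fi a h) - X (fj a h)) * SW b hb (D a p)
      = SW b hb ((X (fi a h) - X (fj a h)) * D a p) := by
        rw [map_mul, SW_fix_sub' h hb hab]
    _ = SW b hb p - SW a h (SW b hb p) := by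
        rw [hD' D hD a h, map_sub, SW_comm h hb hab]

lemma D_comm {a b : ℕ} (h : a + 1 < m) (hb : b + 1 < m) (hab : a + 2 ≤ b) (p : Pm m) :
    D a (D b p) = D b (D a p) := by
  have hc : ((X (fi a h) - X (fj a h)) * (X (fi b hb) - X (fj b hb)) : Pm m) ≠ 0 :=
    mul_ne_zero (xd_ne a h) (xd_ne b hb)
  apply mul_left_cancel₀ hc
  calc (X (fi a h) - X (fj a h)) * (X (fi b hb) - X (fj b hb)) * D a (D b p)
      = (X (fi b hb) - X (fj b hb)) * ((X (fi a h) - X (fj a h)) * D a (D b p)) := by ring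
    _ = (X (fi b hb) - X (fj b hb)) * (D b p - D b (SW a h p)) := by
        rw [hD' D hD a h, SW_D_comm D hD h hb hab]
    _ = (p - SW b hb p) - (SW a h p - SW b hb (SW a h p)) := by
        rw [mul_sub, hD' D hD b hb, hD' D hD b hb]
    _ = (p - SW a h p) - (SW b hb p - SW a h (SW b hb p)) := by
        rw [SW_comm h hb hab]; ring
    _ = (X (fi a h) - X (fj a h)) * (D a p - D a (SW b hb p)) := by
        rw [mul_sub, hD' D hD a h, hD' D hD a h]
    _ = (X (fi a h) - X (fj a h)) * ((X (fi b hb) - X (fj b hb)) * D b (D a p)) := by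
        rw [hD' D hD b hb, SW_D_comm' D hD h hb hab]
    _ = (X (fi a h) - X (fj a h)) * (X (fi b hb) - X (fj b hb)) * D b (D a p) := by ring

lemma phi_D (a : ℕ) (h : a + 1 < m) (f : Pm m) :
    phi (D a f) = Dh (fi a h) (fj a h) (phi f) := by
  have h1 := congrArg (phi (m := m)) (hD' D hD a h f)
  rw [map_mul, map_sub, map_sub] at h1
  have h2 : phi (SW a h f) = Phi (Equiv.swap (fi a h) (fj a h)) (phi f) := by
    rw [Phi_phi]; rfl
  rw [h2] at h1
  rw [show Dh (fi a h) (fj a h) (phi f) = (phi (X (fi a h)) - phi (X (fj a h)))⁻¹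
      * (phi f - Phi (Equiv.swap (fi a h) (fj a h)) (phi f)) from rfl,
    ← h1, ← mul_assoc, inv_mul_cancel₀ (phiX_ne (fi_ne_fj a h)), one_mul]

lemma D_braid (a : ℕ) (h2 : a + 2 < m) (f : Pm m) :
    D a (D (a+1) (D a f)) = D (a+1) (D a (D (a+1) f)) := by
  have h : a + 1 < m := Nat.lt_of_succ_lt h2
  have h2' : (a+1) + 1 < m := h2
  have hfi : fi (a+1) h2' = fj a h := rfl
  have hij : fi a h ≠ fj a h := fi_ne_fj a h
  have hjk : fj a h ≠ fj (a+1) h2' := by simp [fj, Fin.ext_iff]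
  have hik : fi a h ≠ fj (a+1) h2' := by simp [fi, fj, Fin.ext_iff]; omega
  apply phi_inj
  rw [phi_D D hD a h, phi_D D hD (a+1) h2', phi_D D hD a h,
      phi_D D hD (a+1) h2', phi_D D hD a h, phi_D D hD (a+1) h2', hfi]
  exact braidK hij hjk hik (phi f)

omit hD in
lemma notation_check : True := trivial

end WithD

section OpsDefs

variable (D : ℕ → Module.End ℤ (Pm m))

noncomputable def Bop (j : ℕ) : Module.End ℤ (Pm m) := (((List.range j).reverse).map D).prod

noncomputable def WL (n : ℕ) : Module.End ℤ (Pm m) := ((List.range n).map (fun k => Bop D k)).prod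

lemma Bop_zero : Bop D 0 = 1 := rfl

lemma Bop_succ (j : ℕ) : Bop D (j+1) = D j * Bop D j := by
  simp [Bop, List.range_succ]

lemma WL_zero : WL D 0 = 1 := rfl

lemma WL_succ (n : ℕ) : WL D (n+1) = WL D n * Bop D n := by
  simp [WL, List.range_succ]

lemma prod_longestWord : ((longestWord m).map D).prod = WL D m := by
  suffices h : ∀ n, (((List.range n).flatMap fun k => (List.range k).reverse).map D).prod = WL D n by
    exact h m
  intro n
  induction n with
  | zero => rfl
  | succ k ih =>
      rw [List.range_succ, List.flatMap_append, List.map_append, List.prod_append, ih, WL_succ]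
      simp [Bop]

end OpsDefs

section WithD2

variable (D : ℕ → Module.End ℤ (Pm m))
variable (hD : ∀ (a : ℕ) (h : a + 1 < m) (f : Pm m),
      (X (⟨a, Nat.lt_of_succ_lt h⟩ : Fin m) - X ⟨a + 1, h⟩) * D a f
        = f - rename (Equiv.swap (⟨a, Nat.lt_of_succ_lt h⟩ : Fin m) ⟨a + 1, h⟩) f)

include hD

lemma D_mul_comm {a b : ℕ} (h : a + 1 < m) (hb : b + 1 < m) (hab : a + 2 ≤ b) :
    D a * D b = D b * D a :=
  LinearMap.ext fun p => D_comm D hD h hb hab p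

lemma D_mul_braid (a : ℕ) (h2 : a + 2 < m) :
    D a * D (a+1) * D a = D (a+1) * D a * D (a+1) := by
  apply LinearMap.ext
  intro p
  simpa [Module.End.mul_apply] using D_braid D hD a h2 p

lemma D_mul_sq (a : ℕ) (h : a + 1 < m) : D a * D a = 0 :=
  LinearMap.ext fun p => D_D D hD a h p

lemma D_Bop_comm {j a : ℕ} (ha : a + 1 < m) (hja : j < a) :
    D a * Bop D j = Bop D j * D a := by
  induction j with
  | zero => rw [Bop_zero, mul_one, one_mul]
  | succ k ih =>
      have hk : k < a := Nat.lt_of_succ_lt hja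
      have hka : k + 2 ≤ a := hja
      have hkm : k + 1 < m := lt_trans (by omega) ha
      rw [Bop_succ, ← mul_assoc, ← D_mul_comm D hD hkm ha hka, mul_assoc, ih hk, ← mul_assoc]

lemma D_Bop_push {a j : ℕ} (hj : a + 2 ≤ j) (hjm : j < m) :
    D a * Bop D j = Bop D j * D (a+1) := by
  induction j with
  | zero => omega
  | succ k ih =>
      have hkm : k + 1 < m := hjm
      rcases Nat.lt_or_ge (a+2) (k+1) with hlt | hge
      · -- a + 2 ≤ k, use comm with D k then ih
        have hak : a + 2 ≤ k := by omega
        have ham : a + 1 < m := by omega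
        rw [Bop_succ, ← mul_assoc, D_mul_comm D hD ham hkm hak, mul_assoc, ih hak (by omega),
          ← mul_assoc]
      · -- a + 2 = k + 1, i.e. k = a + 1 : braid case
        have hk : k = a + 1 := by omega
        subst hk
        have h2 : a + 2 < m := hjm
        have ham : a + 1 < m := by omega
        rw [Bop_succ, Bop_succ, ← mul_assoc, ← mul_assoc, D_mul_braid D hD a h2,
          mul_assoc, mul_assoc, D_Bop_comm D hD (show (a+1)+1 < m from h2) (by omega)]
        simp only [mul_assoc]

lemma Bop_Bop (j : ℕ) (hj1 : 1 ≤ j) (hjm : j < m) : Bop D j * Bop D j = 0 := by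
  induction j with
  | zero => omega
  | succ k ih =>
      rcases Nat.eq_zero_or_pos k with rfl | hk
      · rw [Bop_succ, Bop_zero, mul_one, D_mul_sq D hD 0 hjm]
      · -- k ≥ 1 : Bop (k+1) * Bop (k+1) = D (k-1) * Bop (k+1) * Bop k = ...
        obtain ⟨k', rfl⟩ : ∃ k', k = k' + 1 := ⟨k - 1, by omega⟩
        have hpush : D k' * Bop D (k'+1+1) = Bop D (k'+1+1) * D (k'+1) :=
          D_Bop_push D hD (a := k') (j := k'+1+1) (by omega) hjm
        calc Bop D (k'+1+1) * Bop D (k'+1+1)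
            = Bop D (k'+1+1) * (D (k'+1) * Bop D (k'+1)) := by rw [Bop_succ D (k'+1)]
          _ = (Bop D (k'+1+1) * D (k'+1)) * Bop D (k'+1) := by rw [mul_assoc]
          _ = (D k' * Bop D (k'+1+1)) * Bop D (k'+1) := by rw [hpush]
          _ = (D k' * (D (k'+1) * Bop D (k'+1))) * Bop D (k'+1) := by rw [Bop_succ D (k'+1)]
          _ = D k' * (D (k'+1) * (Bop D (k'+1) * Bop D (k'+1))) := by simp only [mul_assoc]
          _ = 0 := by rw [ih (by omega) (by omega), mul_zero, mul_zero]

lemma D_WL_comm {a n : ℕ} (ha : a + 1 < m) (hna : n ≤ a) :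
    D a * WL D n = WL D n * D a := by
  induction n with
  | zero => rw [WL_zero, mul_one, one_mul]
  | succ k ih =>
      have hk : k < a := hna
      rw [WL_succ, ← mul_assoc, ih (by omega), mul_assoc, D_Bop_comm D hD ha hk, ← mul_assoc]

lemma D_WL (a n : ℕ) (ha : a + 1 < m) (han : a + 2 ≤ n) (hnm : n ≤ m) :
    D a * WL D n = 0 := by
  induction n with
  | zero => omega
  | succ k ih =>
      rcases Nat.lt_or_ge (a+2) (k+1) with hlt | hge
      · rw [WL_succ, ← mul_assoc, ih (by omega) (by omega), zero_mul]
      · -- a + 2 = k + 1, k = a + 1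
        have hk : k = a + 1 := by omega
        subst hk
        calc D a * WL D (a+1+1)
            = D a * (WL D (a+1) * Bop D (a+1)) := by rw [WL_succ]
          _ = D a * (WL D a * Bop D a * Bop D (a+1)) := by rw [WL_succ]
          _ = (D a * WL D a) * Bop D a * Bop D (a+1) := by rw [← mul_assoc, ← mul_assoc]
          _ = (WL D a * D a) * Bop D a * Bop D (a+1) := by rw [D_WL_comm D hD ha (le_refl a)]
          _ = WL D a * (D a * Bop D a) * Bop D (a+1) := by rw [mul_assoc (WL D a)]
          _ = WL D a * Bop D (a+1) * Bop D (a+1) := by rw [← Bop_succ]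
          _ = WL D a * (Bop D (a+1) * Bop D (a+1)) := by rw [mul_assoc]
          _ = 0 := by rw [Bop_Bop D hD (a+1) (by omega) (by omega), mul_zero]

end WithD2

section Monomials

noncomputable def Mexp (e : Fin m → ℕ) : Pm m := ∏ a, X a ^ e a

def expo (j k : ℕ) : Fin m → ℕ := fun a => if (a : ℕ) < k then j - 1 - a else j - a

noncomputable def mon (n : ℕ) : Pm m := Mexp (fun a => n - 1 - (a : ℕ))

lemma prod_shift {e e' : Fin m → ℕ} {i : Fin m}
    (he : ∀ a, e a = e' a + if a = i then 1 else 0) :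
    Mexp e = Mexp e' * X i := by
  unfold Mexp
  have h1 : ∀ a : Fin m, (X a : Pm m) ^ e a = X a ^ e' a * X a ^ (if a = i then 1 else 0) := by
    intro a; rw [← pow_add, ← he a]
  rw [Finset.prod_congr rfl (fun a _ => h1 a), Finset.prod_mul_distrib]
  congr 1
  have h2 : ∀ a : Fin m, (X a : Pm m) ^ (if a = i then 1 else 0)
      = if a = i then X i else 1 := by
    intro a
    by_cases hai : a = i
    · subst hai; simp
    · simp [hai]
  rw [Finset.prod_congr rfl (fun a _ => h2 a)]
  simp

lemma rename_Mexp (σ : Equiv.Perm (Fin m)) (e : Fin m → ℕ) :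
    rename (⇑σ) (Mexp e) = Mexp (fun a => e (σ.symm a)) := by
  unfold Mexp
  rw [map_prod]
  simp only [map_pow, rename_X]
  rw [← Equiv.prod_comp σ (fun b => (X b : Pm m) ^ e (σ.symm b))]
  apply Finset.prod_congr rfl
  intro a _
  rw [Equiv.symm_apply_apply]

end Monomials

section WithD3

variable (D : ℕ → Module.End ℤ (Pm m))
variable (hD : ∀ (a : ℕ) (h : a + 1 < m) (f : Pm m),
      (X (⟨a, Nat.lt_of_succ_lt h⟩ : Fin m) - X ⟨a + 1, h⟩) * D a f
        = f - rename (Equiv.swap (⟨a, Nat.lt_of_succ_lt h⟩ : Fin m) ⟨a + 1, h⟩) f)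

include hD

lemma D_step {j k : ℕ} (hjk : k + 1 ≤ j) (hk1 : k + 1 < m) :
    D k (Mexp (expo j k)) = Mexp (expo j (k+1)) := by
  have P1 : Mexp (expo j k) = Mexp (expo j (k+1)) * X (fi k hk1) := by
    apply prod_shift
    intro a
    by_cases hak : a = fi k hk1
    · subst hak
      rw [if_pos rfl]
      dsimp only [expo, fi]
      split_ifs <;> omega
    · have hv : (a : ℕ) ≠ k := fun hh => hak (Fin.ext hh)
      simp only [expo, if_neg hak, add_zero]
      rcases Nat.lt_or_ge (a : ℕ) k with hlt | hge
      · rw [if_pos hlt, if_pos (by omega)]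
      · rw [if_neg (by omega), if_neg (by omega)]
  have P2 : SW k hk1 (Mexp (expo j k)) = Mexp (expo j (k+1)) * X (fj k hk1) := by
    rw [show (SW k hk1 : Pm m →ₐ[ℤ] Pm m) (Mexp (expo j k))
        = rename (⇑(Equiv.swap (fi k hk1) (fj k hk1))) (Mexp (expo j k)) from rfl]
    rw [rename_Mexp]
    apply prod_shift
    intro a
    rw [Equiv.symm_swap]
    by_cases ha1 : a = fi k hk1
    · subst ha1
      rw [Equiv.swap_apply_left, if_neg (fi_ne_fj k hk1), add_zero]
      dsimp only [expo, fj, fi]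
      split_ifs <;> omega
    · by_cases ha2 : a = fj k hk1
      · subst ha2
        rw [Equiv.swap_apply_right, if_pos rfl]
        dsimp only [expo, fj, fi]
        split_ifs <;> omega
      · rw [Equiv.swap_apply_of_ne_of_ne ha1 ha2, if_neg ha2, add_zero]
        have hv1 : (a : ℕ) ≠ k := fun hh => ha1 (Fin.ext hh)
        have hv2 : (a : ℕ) ≠ k + 1 := fun hh => ha2 (Fin.ext hh)
        simp only [expo]
        rcases Nat.lt_or_ge (a : ℕ) k with hlt | hge
        · rw [if_pos hlt, if_pos (by omega)]
        · rw [if_neg (by omega), if_neg (by omega)]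
  apply cancel k hk1
  rw [hD' D hD k hk1, P2, P1]
  ring

lemma Bop_M {j : ℕ} (hj : j < m) : ∀ k, k ≤ j → Bop D k (Mexp (expo j 0)) = Mexp (expo j k) := by
  intro k
  induction k with
  | zero => intro _; rw [Bop_zero]; rfl
  | succ n ih =>
      intro hnj
      have h1 : Bop D (n+1) (Mexp (expo j 0)) = D n (Bop D n (Mexp (expo j 0))) := by
        rw [Bop_succ]; rfl
      rw [h1, ih (by omega), D_step D hD (by omega) (by omega)]

omit hD in
lemma mon_zero : (mon 0 : Pm m) = 1 := by
  unfold mon Mexp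
  apply Finset.prod_eq_one
  intro a _
  norm_num

omit hD in
lemma mon_expo_left (j : ℕ) : (Mexp (expo j 0) : Pm m) = mon (j + 1) := by
  unfold mon Mexp
  apply Finset.prod_congr rfl
  intro a _
  simp [expo]

omit hD in
lemma mon_expo_right (j : ℕ) : (Mexp (expo j j) : Pm m) = mon j := by
  unfold mon Mexp
  apply Finset.prod_congr rfl
  intro a _
  congr 1
  simp only [expo]
  split_ifs <;> omega

lemma WL_mon : ∀ n, n ≤ m → WL D n (mon n) = 1 := by
  intro n
  induction n with
  | zero => intro _; rw [WL_zero, mon_zero]; rfl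
  | succ k ih =>
      intro hkm
      have h1 : WL D (k+1) (mon (k+1)) = WL D k (Bop D k (mon (k+1))) := by
        rw [WL_succ]; rfl
      rw [h1, ← mon_expo_left, Bop_M D hD (by omega) k le_rfl, mon_expo_right,
        ih (by omega)]

lemma prodD_mul_inv (l : List ℕ) (hl : ∀ b ∈ l, b + 1 < m) {g : Pm m}
    (hg : ∀ (b : ℕ) (hb : b + 1 < m), SW b hb g = g) (p : Pm m) :
    ((l.map D).prod) (p * g) = ((l.map D).prod) p * g := by
  induction l with
  | nil => simp
  | cons a l ih =>
      have ha : a + 1 < m := hl a List.mem_cons_self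
      have h1 : (((a :: l).map D).prod) (p * g) = D a (((l.map D).prod) (p * g)) := by
        rw [List.map_cons, List.prod_cons]; rfl
      rw [h1, ih (fun b hb => hl b (List.mem_cons_of_mem a hb)),
        mul_comm (((l.map D).prod) p) g, D_mul_inv D hD a ha (hg a ha),
        mul_comm g (D a (((l.map D).prod) p))]
      rw [List.map_cons, List.prod_cons]; rfl

end WithD3

lemma longestWord_mem {b : ℕ} (hb : b ∈ longestWord m) : b + 1 < m := by
  unfold longestWord at hb
  rw [List.mem_flatMap] at hb
  obtain ⟨k, hk, hbk⟩ := hb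
  rw [List.mem_range] at hk
  rw [List.mem_reverse, List.mem_range] at hbk
  omega

end NilHeckeAux

theorem nilHecke_em_idempotent (m : ℕ)
    (D : ℕ → Module.End ℤ (MvPolynomial (Fin m) ℤ))
    (hD : ∀ (a : ℕ) (h : a + 1 < m) (f : MvPolynomial (Fin m) ℤ),
      (X (⟨a, Nat.lt_of_succ_lt h⟩ : Fin m) - X ⟨a + 1, h⟩) * D a f
        = f - rename (Equiv.swap (⟨a, Nat.lt_of_succ_lt h⟩ : Fin m) ⟨a + 1, h⟩) f) :
    let dw0 : Module.End ℤ (MvPolynomial (Fin m) ℤ) := ((longestWord m).map D).prod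
    let xmon : MvPolynomial (Fin m) ℤ := ∏ a : Fin m, X a ^ (m - 1 - (a : ℕ))
    let em : Module.End ℤ (MvPolynomial (Fin m) ℤ) :=
      (LinearMap.mulLeft ℤ xmon : Module.End ℤ (MvPolynomial (Fin m) ℤ)) * dw0
    em * em = em := by
  intro dw0 xmon em
  open NilHeckeAux in
  apply LinearMap.ext
  intro f
  have hxmon : xmon = NilHeckeAux.mon m := rfl
  have hg : ∀ (b : ℕ) (hb : b + 1 < m), NilHeckeAux.SW b hb (dw0 f) = dw0 f := by
    intro b hb
    apply NilHeckeAux.inv_of_D_eq_zero D hD b hb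
    have h0 : D b * NilHeckeAux.WL D m = 0 :=
      NilHeckeAux.D_WL D hD b m hb (by omega) le_rfl
    have : dw0 = NilHeckeAux.WL D m := NilHeckeAux.prod_longestWord D
    calc D b (dw0 f) = (D b * dw0) f := rfl
      _ = 0 := by rw [this, h0]; rfl
  have key : dw0 (xmon * dw0 f) = dw0 f := by
    show ((longestWord m).map D).prod (xmon * dw0 f) = dw0 f
    rw [NilHeckeAux.prodD_mul_inv D hD (longestWord m)
        (fun b hb => NilHeckeAux.longestWord_mem hb) hg xmon]
    have h2 : ((longestWord m).map D).prod xmon = 1 := by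
      have := NilHeckeAux.prod_longestWord D
      rw [show (((longestWord m).map D).prod : Module.End ℤ (MvPolynomial (Fin m) ℤ))
          = NilHeckeAux.WL D m from NilHeckeAux.prod_longestWord D, hxmon]
      exact NilHeckeAux.WL_mon D hD m le_rfl
    rw [h2, one_mul]
  show em (em f) = em f
  have hem : ∀ p, em p = xmon * dw0 p := fun p => rfl
  rw [hem, hem, key]
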